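/- arXiv:1607.08226 — 2 statements merged into one kernel-verified Lean document; each statement's English description precedes it below -/
import Mathlib

section
/- Let x be a binary m-sequence of length n = 2^k − 1 (the output of one full period of a maximal-length k-stage LFSR). Then n/2 − A_N(x) = O(log² n); concretely, A_N(x) ≥ (n+1)/2 − log₂(n+1)·(log₂(n+1)−1)/2. -/
/-- `Λ` is a binary `k`-stage linear feedback shift register: a combinatorial
shift register over `𝔽₂` whose feedback function is linear. -/
def IsLFSR (k : ℕ) (Λ : (Fin k → ZMod 2) → (Fin k → ZMod 2)) : Prop :=
  ∃ F : (Fin k → ZMod 2) → ZMod 2, IsLinearMap (ZMod 2) F ∧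
    ∀ v : Fin k → ZMod 2, ∀ i : Fin k,
      Λ v i = if h : (i : ℕ) + 1 < k then v ⟨(i : ℕ) + 1, h⟩ else F v

/-- The infinite sequence `x` is produced by `Λ`. -/
def Produces {k : ℕ} (Λ : (Fin k → ZMod 2) → (Fin k → ZMod 2)) (x : ℕ → ZMod 2) : Prop :=
  ∀ n : ℕ, Λ^[n] (fun i : Fin k => x i) = fun i : Fin k => x (n + i)

/-- `N` is an eventual period of the sequence `y`. -/
def IsEvPeriod {β : Type*} (y : ℕ → β) (N : ℕ) : Prop :=
  0 < N ∧ ∃ M : ℕ, ∀ n > M, y n = y (n - N)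

/-- The eventual period of `y`: the least eventual period. -/
noncomputable def evPeriod {β : Type*} (y : ℕ → β) : ℕ :=
  sInf {N | IsEvPeriod y N}

section AN
variable {α : Type*}

/-- `p` is an accepting path of length `n` for the word `y` in the NFA with
transition relation `δ`, initial state `init` and accepting states `acc`. -/
def NFAPath {σ : Type*} (δ : σ → α → σ → Prop) (init : σ) (acc : Set σ)
    (n : ℕ) (y : ℕ → α) (p : ℕ → σ) : Prop :=
  p 0 = init ∧ p n ∈ acc ∧ ∀ i < n, δ (p i) (y i) (p (i + 1))

/-- There is an NFA with `m` states accepting the length-`n` word `x` with a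
unique accepting path of length `n`. -/
def ANWitness (m n : ℕ) (x : ℕ → α) : Prop :=
  ∃ (δ : Fin m → α → Fin m → Prop) (init : Fin m) (acc : Set (Fin m)),
    (∃ p, NFAPath δ init acc n x p) ∧
    ∀ y₁ p₁ y₂ p₂, NFAPath δ init acc n y₁ p₁ → NFAPath δ init acc n y₂ p₂ →
      (∀ i < n, y₁ i = y₂ i) ∧ (∀ i ≤ n, p₁ i = p₂ i)

/-- The nondeterministic automatic complexity of the length-`n` word `x`. -/
noncomputable def AN (n : ℕ) (x : ℕ → α) : ℕ := sInf {m | ANWitness m n x}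

end AN

section Helpers

lemma lemB {k : ℕ} {Λ : (Fin k → ZMod 2) → (Fin k → ZMod 2)} {x : ℕ → ZMod 2}
    (hx : Produces Λ x)
    (hP : evPeriod (fun t => Λ^[t] (fun i : Fin k => x i)) = 2 ^ k - 1)
    {ℓ a : ℕ} (hℓ : 0 < ℓ) (hℓn : ℓ < 2 ^ k - 1)
    (hper : ∀ u, a ≤ u → u < a + k → x (u + ℓ) = x u) : False := by
  set S : ℕ → (Fin k → ZMod 2) := fun t => Λ^[t] (fun i : Fin k => x i) with hS
  have hSx : ∀ t, S t = fun i : Fin k => x (t + i) := hx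
  have key : S (a + ℓ) = S a := by
    rw [hSx, hSx]; funext i
    have h1 := hper (a + i) (by omega) (by have := i.isLt; omega)
    have h2 : a + ℓ + (i : ℕ) = (a + i) + ℓ := by omega
    rw [h2, h1]
  have mono : ∀ u, a ≤ u → S (u + ℓ) = S u := by
    intro u hu
    have e1 : S (u + ℓ) = Λ^[u - a] (S (a + ℓ)) := by
      have h : u + ℓ = (u - a) + (a + ℓ) := by omega
      rw [hS]
      simp only []
      rw [h, Function.iterate_add_apply]
    have e2 : S u = Λ^[u - a] (S a) := by
      have h : u = (u - a) + a := by omega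
      rw [hS]
      simp only []
      conv_lhs => rw [h]
      rw [Function.iterate_add_apply]
    rw [e1, key, ← e2]
  have hmem : IsEvPeriod S ℓ := by
    refine ⟨hℓ, a + ℓ, fun t ht => ?_⟩
    have h1 : a ≤ t - ℓ := by omega
    have h2 := mono (t - ℓ) h1
    have h3 : t - ℓ + ℓ = t := by omega
    rw [h3] at h2; exact h2
  have hle : evPeriod S ≤ ℓ := Nat.sInf_le hmem
  rw [hP] at hle
  omega

lemma witness_exists {α : Type*} (n : ℕ) (x : ℕ → α) : ANWitness (n + 1) n x := by
  classical
  refine ⟨fun s a s' => (s' : ℕ) = (s : ℕ) + 1 ∧ a = x (s : ℕ), ⟨0, Nat.succ_pos n⟩,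
    {s | (s : ℕ) = n}, ⟨fun t => ⟨min t n, by omega⟩, ?_, ?_, ?_⟩, ?_⟩
  · ext; simp
  · simp
  · intro t ht
    constructor
    · simp; omega
    · simp [Nat.min_eq_left ht.le]
  · intro y₁ p₁ y₂ p₂ h₁ h₂
    have key : ∀ (y : ℕ → α) (q : ℕ → Fin (n + 1)), NFAPath
        (fun (s : Fin (n + 1)) (a : α) (s' : Fin (n + 1)) => (s' : ℕ) = (s : ℕ) + 1 ∧ a = x (s : ℕ))
        (⟨0, Nat.succ_pos n⟩ : Fin (n + 1))
        {s | (s : ℕ) = n} n y q →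
        (∀ i ≤ n, (q i : ℕ) = i) ∧ (∀ i < n, y i = x i) := by
      intro y q hq
      have hstep : ∀ i, i ≤ n → (q i : ℕ) = i := by
        intro i
        induction i with
        | zero => intro _; rw [hq.1]
        | succ i ih =>
          intro hi
          have h := (hq.2.2 i (by omega)).1
          rw [h, ih (by omega)]
      refine ⟨hstep, fun i hi => ?_⟩
      have h := (hq.2.2 i hi).2
      rw [h, hstep i (by omega)]
    obtain ⟨hq1, hy1⟩ := key _ _ h₁
    obtain ⟨hq2, hy2⟩ := key _ _ h₂
    exact ⟨fun i hi => (hy1 i hi).trans (hy2 i hi).symm,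
      fun i hi => Fin.ext ((hq1 i hi).trans (hq2 i hi).symm)⟩

end Helpers
section Key
variable {α : Type*} {σ : Type*} {δ : σ → α → σ → Prop} {init : σ} {acc : Set σ}
  {n : ℕ} {x : ℕ → α} {p : ℕ → σ}

lemma keyA'
    (hp : NFAPath δ init acc n x p)
    (hu : ∀ y₁ p₁ y₂ p₂, NFAPath δ init acc n y₁ p₁ → NFAPath δ init acc n y₂ p₂ →
      (∀ i < n, y₁ i = y₂ i) ∧ (∀ i ≤ n, p₁ i = p₂ i))
    {i i' j j' : ℕ} (h1 : i ≤ i') (h2 : i' < j) (h3 : j ≤ j') (h4 : j' ≤ n)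
    (e1 : p i = p j) (e2 : p i' = p j') :
    ∀ u, i ≤ u → u < i + (j' - j) → x (u + (j - i)) = x u := by
  classical
  obtain ⟨hp0, hpn, hpt⟩ := hp
  set γ := j' - j with hγ
  set β := j - i' with hβ
  have hβ1 : 1 ≤ β := by omega
  have hsum : i + γ + β + (i' - i) = j' := by omega
  set q : ℕ → σ := fun t =>
    if t < i then p t
    else if t < i + γ then p (j + (t - i))
    else if t < i + γ + β then p (i' + (t - i - γ))
    else if t < j' then p (i + (t - i - γ - β))
    else p t with hqdef
  set y : ℕ → α := fun t =>
    if t < i then x t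
    else if t < i + γ then x (j + (t - i))
    else if t < i + γ + β then x (i' + (t - i - γ))
    else if t < j' then x (i + (t - i - γ - β))
    else x t with hydef
  have hq0 : ∀ t, t < i → q t = p t := by
    intro t ht; simp only [hqdef, if_pos ht]
  have hq2 : ∀ t, i ≤ t → t ≤ i + γ → q t = p (j + (t - i)) := by
    intro t h h'
    simp only [hqdef]
    rw [if_neg (by omega)]
    by_cases hA : t < i + γ
    · rw [if_pos hA]
    · have ht : t = i + γ := by omega
      rw [if_neg hA, if_pos (by omega : t < i + γ + β)]
      have h5 : t - i - γ = 0 := by omega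
      have h6 : j + (t - i) = j' := by omega
      rw [h5, h6, Nat.add_zero]
      exact e2
  have hq3 : ∀ t, i + γ ≤ t → t ≤ i + γ + β → q t = p (i' + (t - i - γ)) := by
    intro t h h'
    simp only [hqdef]
    rw [if_neg (by omega), if_neg (by omega)]
    by_cases hA : t < i + γ + β
    · rw [if_pos hA]
    · have ht : t = i + γ + β := by omega
      have h6 : i' + (t - i - γ) = j := by omega
      rw [if_neg hA, h6]
      by_cases hB : t < j'
      · rw [if_pos hB]
        have h7 : i + (t - i - γ - β) = i := by omega
        rw [h7]; exact e1
      · have h8 : t = j' := by omega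
        rw [if_neg hB, h8]
        have h9 : i = i' := by omega
        rw [← e1, h9, e2]
  have hq4 : ∀ t, i + γ + β ≤ t → t ≤ j' → q t = p (i + (t - i - γ - β)) := by
    intro t h h'
    simp only [hqdef]
    rw [if_neg (by omega), if_neg (by omega), if_neg (by omega)]
    by_cases hA : t < j'
    · rw [if_pos hA]
    · have ht : t = j' := by omega
      have h6 : i + (t - i - γ - β) = i' := by omega
      rw [if_neg hA, h6, ht]
      exact e2.symm
  have hq5 : ∀ t, j' ≤ t → q t = p t := by
    intro t ht
    simp only [hqdef]
    rw [if_neg (by omega), if_neg (by omega), if_neg (by omega), if_neg (by omega)]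
  have hqi : q i = p i := by
    rw [hq2 i le_rfl (by omega)]
    simp only [Nat.sub_self, Nat.add_zero]
    exact e1.symm
  have hyA : ∀ t, t < i → y t = x t := by
    intro t ht; simp only [hydef, if_pos ht]
  have hyB : ∀ t, i ≤ t → t < i + γ → y t = x (j + (t - i)) := by
    intro t h h'; simp only [hydef]; rw [if_neg (by omega), if_pos h']
  have hyC : ∀ t, i + γ ≤ t → t < i + γ + β → y t = x (i' + (t - i - γ)) := by
    intro t h h'; simp only [hydef]
    rw [if_neg (by omega), if_neg (by omega), if_pos h']
  have hyD : ∀ t, i + γ + β ≤ t → t < j' → y t = x (i + (t - i - γ - β)) := by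
    intro t h h'; simp only [hydef]
    rw [if_neg (by omega), if_neg (by omega), if_neg (by omega), if_pos h']
  have hyE : ∀ t, j' ≤ t → y t = x t := by
    intro t ht; simp only [hydef]
    rw [if_neg (by omega), if_neg (by omega), if_neg (by omega), if_neg (by omega)]
  have hq : NFAPath δ init acc n y q := by
    refine ⟨?_, ?_, ?_⟩
    · have h0 : q 0 = p 0 := by
        rcases Nat.eq_zero_or_pos i with h | h
        · rw [← h]; exact hqi
        · exact hq0 0 h
      rw [h0]; exact hp0
    · rw [hq5 n h4]; exact hpn
    · intro t ht
      by_cases c1 : t + 1 ≤ i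
      · have e_t : q t = p t := hq0 t (by omega)
        have e_y : y t = x t := hyA t (by omega)
        have e_t1 : q (t + 1) = p (t + 1) := by
          rcases Nat.lt_or_ge (t + 1) i with h | h
          · exact hq0 _ h
          · have h5 : t + 1 = i := by omega
            rw [h5]; exact hqi
        rw [e_t, e_y, e_t1]; exact hpt t ht
      · by_cases c2 : t + 1 ≤ i + γ
        · have hti : i ≤ t := by omega
          have e_t : q t = p (j + (t - i)) := hq2 t hti (by omega)
          have e_y : y t = x (j + (t - i)) := hyB t hti (by omega)
          have e_t1 : q (t + 1) = p (j + (t - i) + 1) := by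
            rw [hq2 (t + 1) (by omega) c2]
            congr 1; omega
          rw [e_t, e_y, e_t1]
          exact hpt (j + (t - i)) (by omega)
        · by_cases c3 : t + 1 ≤ i + γ + β
          · have hti : i + γ ≤ t := by omega
            have e_t : q t = p (i' + (t - i - γ)) := hq3 t hti (by omega)
            have e_y : y t = x (i' + (t - i - γ)) := hyC t hti (by omega)
            have e_t1 : q (t + 1) = p (i' + (t - i - γ) + 1) := by
              rw [hq3 (t + 1) (by omega) c3]
              congr 1; omega
            rw [e_t, e_y, e_t1]
            exact hpt (i' + (t - i - γ)) (by omega)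
          · by_cases c4 : t + 1 ≤ j'
            · have hti : i + γ + β ≤ t := by omega
              have e_t : q t = p (i + (t - i - γ - β)) := hq4 t hti (by omega)
              have e_y : y t = x (i + (t - i - γ - β)) := hyD t hti (by omega)
              have e_t1 : q (t + 1) = p (i + (t - i - γ - β) + 1) := by
                rw [hq4 (t + 1) (by omega) c4]
                congr 1; omega
              rw [e_t, e_y, e_t1]
              exact hpt (i + (t - i - γ - β)) (by omega)
            · have e_t : q t = p t := hq5 t (by omega)
              have e_y : y t = x t := hyE t (by omega)
              have e_t1 : q (t + 1) = p (t + 1) := hq5 _ (by omega)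
              rw [e_t, e_y, e_t1]; exact hpt t ht
  obtain ⟨hw, -⟩ := hu y q x p hq ⟨hp0, hpn, hpt⟩
  intro u hu1 hu2
  have h5 : u < n := by omega
  have h6 : u + (j - i) = j + (u - i) := by omega
  rw [h6, ← hyB u hu1 (by omega)]
  exact hw u h5

end Key
section Key2
variable {α : Type*} {σ : Type*} {δ : σ → α → σ → Prop} {init : σ} {acc : Set σ}
  {n : ℕ} {x : ℕ → α} {p : ℕ → σ}

lemma keyA''
    (hp : NFAPath δ init acc n x p)
    (hu : ∀ y₁ p₁ y₂ p₂, NFAPath δ init acc n y₁ p₁ → NFAPath δ init acc n y₂ p₂ →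
      (∀ i < n, y₁ i = y₂ i) ∧ (∀ i ≤ n, p₁ i = p₂ i))
    {i j i' j' : ℕ} (h1 : i < j) (h2 : j ≤ i') (h3 : i' < j') (h4 : j' ≤ n)
    (hlen : j' - i' = j - i) (e1 : p i = p j) (e2 : p i' = p j') :
    ∀ u, i ≤ u → u < i' → x (u + (j - i)) = x u := by
  classical
  obtain ⟨hp0, hpn, hpt⟩ := hp
  set ℓ := j - i with hℓdef
  have hℓ1 : 1 ≤ ℓ := by omega
  have hj' : j' = i' + ℓ := by omega
  set q : ℕ → σ := fun t =>
    if t < j then p t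
    else if t < j + ℓ then p (i + (t - j))
    else if t < j' then p (j + (t - j - ℓ))
    else p t with hqdef
  set y : ℕ → α := fun t =>
    if t < j then x t
    else if t < j + ℓ then x (i + (t - j))
    else if t < j' then x (j + (t - j - ℓ))
    else x t with hydef
  have hq0 : ∀ t, t < j → q t = p t := by
    intro t ht; simp only [hqdef, if_pos ht]
  have hq2 : ∀ t, j ≤ t → t ≤ j + ℓ → q t = p (i + (t - j)) := by
    intro t h h'
    simp only [hqdef]
    rw [if_neg (by omega)]
    by_cases hA : t < j + ℓ
    · rw [if_pos hA]
    · have ht : t = j + ℓ := by omega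
      rw [if_neg hA]
      by_cases hB : t < j'
      · rw [if_pos hB]; congr 1; omega
      · have h8 : t = j' := by omega
        have h9 : i' = j := by omega
        rw [if_neg hB, h8]
        have h10 : i + (j' - j) = j := by omega
        rw [h10, ← e2, h9]
  have hq3 : ∀ t, j + ℓ ≤ t → t ≤ j' → q t = p (j + (t - j - ℓ)) := by
    intro t h h'
    simp only [hqdef]
    rw [if_neg (by omega), if_neg (by omega)]
    by_cases hA : t < j'
    · rw [if_pos hA]
    · have ht : t = j' := by omega
      have h6 : j + (t - j - ℓ) = i' := by omega
      rw [if_neg hA, h6, ht]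
      exact e2.symm
  have hq5 : ∀ t, j' ≤ t → q t = p t := by
    intro t ht
    simp only [hqdef]
    rw [if_neg (by omega), if_neg (by omega), if_neg (by omega)]
  have hqj : q j = p j := by
    rw [hq2 j le_rfl (by omega)]
    simp only [Nat.sub_self, Nat.add_zero]
    exact e1
  have hyA : ∀ t, t < j → y t = x t := by
    intro t ht; simp only [hydef, if_pos ht]
  have hyB : ∀ t, j ≤ t → t < j + ℓ → y t = x (i + (t - j)) := by
    intro t h h'; simp only [hydef]; rw [if_neg (by omega), if_pos h']
  have hyC : ∀ t, j + ℓ ≤ t → t < j' → y t = x (j + (t - j - ℓ)) := by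
    intro t h h'; simp only [hydef]
    rw [if_neg (by omega), if_neg (by omega), if_pos h']
  have hyE : ∀ t, j' ≤ t → y t = x t := by
    intro t ht; simp only [hydef]
    rw [if_neg (by omega), if_neg (by omega), if_neg (by omega)]
  have hq : NFAPath δ init acc n y q := by
    refine ⟨?_, ?_, ?_⟩
    · rw [hq0 0 (by omega)]; exact hp0
    · rw [hq5 n h4]; exact hpn
    · intro t ht
      by_cases c1 : t + 1 ≤ j
      · have e_t : q t = p t := hq0 t (by omega)
        have e_y : y t = x t := hyA t (by omega)
        have e_t1 : q (t + 1) = p (t + 1) := by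
          rcases Nat.lt_or_ge (t + 1) j with h | h
          · exact hq0 _ h
          · have h5 : t + 1 = j := by omega
            rw [h5]; exact hqj
        rw [e_t, e_y, e_t1]; exact hpt t ht
      · by_cases c2 : t + 1 ≤ j + ℓ
        · have htj : j ≤ t := by omega
          have e_t : q t = p (i + (t - j)) := hq2 t htj (by omega)
          have e_y : y t = x (i + (t - j)) := hyB t htj (by omega)
          have e_t1 : q (t + 1) = p (i + (t - j) + 1) := by
            rw [hq2 (t + 1) (by omega) c2]
            congr 1; omega
          rw [e_t, e_y, e_t1]
          exact hpt (i + (t - j)) (by omega)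
        · by_cases c3 : t + 1 ≤ j'
          · have htj : j + ℓ ≤ t := by omega
            have e_t : q t = p (j + (t - j - ℓ)) := hq3 t htj (by omega)
            have e_y : y t = x (j + (t - j - ℓ)) := hyC t htj (by omega)
            have e_t1 : q (t + 1) = p (j + (t - j - ℓ) + 1) := by
              rw [hq3 (t + 1) (by omega) c3]
              congr 1; omega
            rw [e_t, e_y, e_t1]
            exact hpt (j + (t - j - ℓ)) (by omega)
          · have e_t : q t = p t := hq5 t (by omega)
            have e_y : y t = x t := hyE t (by omega)
            have e_t1 : q (t + 1) = p (t + 1) := hq5 _ (by omega)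
            rw [e_t, e_y, e_t1]; exact hpt t ht
  obtain ⟨hw, -⟩ := hu y q x p hq ⟨hp0, hpn, hpt⟩
  intro u hu1 hu2
  by_cases hc : u < j
  · have h5 : j + (u - i) < n := by omega
    have h6 := hyB (j + (u - i)) (by omega) (by omega)
    have h7 : i + (j + (u - i) - j) = u := by omega
    rw [h7] at h6
    have h8 : u + ℓ = j + (u - i) := by omega
    rw [h8, ← h6]
    exact (hw (j + (u - i)) h5).symm
  · have h5 : u + ℓ < n := by omega
    have h6 := hyC (u + ℓ) (by omega) (by omega)
    have h7 : j + (u + ℓ - j - ℓ) = u := by omega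
    rw [h7] at h6
    rw [← h6]
    exact (hw (u + ℓ) h5).symm

end Key2
lemma count_bound {k n : ℕ} (hk : 0 < k) {Λ : (Fin k → ZMod 2) → (Fin k → ZMod 2)}
    {x : ℕ → ZMod 2} (hx : Produces Λ x)
    (hP : evPeriod (fun t => Λ^[t] (fun i : Fin k => x i)) = 2 ^ k - 1)
    (hn : n = 2 ^ k - 1) {m : ℕ} (hm : ANWitness m n x) :
    n + 1 ≤ 2 * m + k * (k - 1) := by
  classical
  obtain ⟨δ, init, acc, ⟨p, hp⟩, hu⟩ := hm
  have hn1 : 1 ≤ n := by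
    have h2 : (2:ℕ) ^ 1 ≤ 2 ^ k := Nat.pow_le_pow_right (by norm_num) hk
    omega
  have hk2 : k < 2 ^ k := Nat.lt_two_pow_self (n := k)
  set f : ℕ → ℕ := fun t => Nat.findGreatest (fun u => p u = p t) (t - 1) with hfdef
  set Bad : Finset ℕ := (Finset.range (n + 1)).filter
      (fun t => ∃ t₁ t₂, t₁ < t₂ ∧ t₂ < t ∧ p t₁ = p t ∧ p t₂ = p t) with hBaddef
  -- basic facts about elements of Bad
  have hBase : ∀ t ∈ Bad, t ≤ n ∧ f t < t ∧ p (f t) = p t ∧ ∃ t₁, t₁ < f t ∧ p t₁ = p t := by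
    intro t ht
    simp only [hBaddef, Finset.mem_filter, Finset.mem_range] at ht
    obtain ⟨htn, t₁, t₂, h12, h2t, ee1, ee2⟩ := ht
    have hf_le : f t ≤ t - 1 := Nat.findGreatest_le _
    have hf1 : t₂ ≤ f t := Nat.le_findGreatest (m := t₂) (by omega) ee2
    have hf2 : p (f t) = p t :=
      Nat.findGreatest_spec (P := fun u => p u = p t) (n := t - 1) (m := t₂) (by omega) ee2
    exact ⟨by omega, by omega, hf2, t₁, by omega, ee1⟩
  -- the gap t - f t is in [1, k-1]
  have hLen : ∀ t ∈ Bad, 1 ≤ t - f t ∧ t - f t ≤ k - 1 := by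
    intro t ht
    obtain ⟨htn, hft, hfp, t₁, ht1, hp1⟩ := hBase t ht
    refine ⟨by omega, ?_⟩
    by_contra hcon
    have hge : k ≤ t - f t := by omega
    have hper := keyA' hp hu (i := t₁) (i' := t₁) (j := f t) (j' := t)
      le_rfl ht1 (by omega) (by omega) (hp1.trans hfp.symm) hp1
    exact lemB hx hP (ℓ := f t - t₁) (a := t₁) (by omega) (by omega)
      (fun u h h' => hper u h (by omega))
  -- two Bad elements with the same gap are within k-1 of each other
  have hSame : ∀ t ∈ Bad, ∀ t' ∈ Bad, t - f t = t' - f t' → t < t' → t' - t ≤ k - 1 := by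
    intro t ht t' ht' heq hlt
    obtain ⟨htn, hft, hfp, t₁, ht1, hp1⟩ := hBase t ht
    obtain ⟨htn', hft', hfp', t₁', ht1', hp1'⟩ := hBase t' ht'
    obtain ⟨hg1, hg2⟩ := hLen t ht
    obtain ⟨hg1', hg2'⟩ := hLen t' ht'
    have hff : f t < f t' := by omega
    by_contra hcon
    have hge : k ≤ t' - t := by omega
    by_cases hc : f t' < t
    · have hper := keyA' hp hu (i := f t) (i' := f t') (j := t) (j' := t')
        (by omega) hc (by omega) (by omega) hfp hfp'
      exact lemB hx hP (ℓ := t - f t) (a := f t) (by omega) (by omega)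
        (fun u h h' => hper u h (by omega))
    · have hper := keyA'' hp hu (i := f t) (j := t) (i' := f t') (j' := t')
        (by omega) (by omega) (by omega) (by omega) (by omega) hfp hfp'
      exact lemB hx hP (ℓ := t - f t) (a := f t) (by omega) (by omega)
        (fun u h h' => hper u h (by omega))
  -- Bad has at most k*(k-1) elements
  have hBadCard : Bad.card ≤ k * (k - 1) := by
    have hsub : Bad ⊆ (Finset.Icc 1 (k - 1)).biUnion
        (fun ℓ => Bad.filter (fun t => t - f t = ℓ)) := by
      intro t ht
      obtain ⟨hg1, hg2⟩ := hLen t ht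
      simp only [Finset.mem_biUnion, Finset.mem_Icc, Finset.mem_filter]
      exact ⟨t - f t, ⟨hg1, hg2⟩, ht, rfl⟩
    have hcard : ∀ ℓ, (Bad.filter (fun t => t - f t = ℓ)).card ≤ k := by
      intro ℓ
      by_cases hne : (Bad.filter (fun t => t - f t = ℓ)).Nonempty
      · set t₀ := (Bad.filter (fun t => t - f t = ℓ)).min' hne with ht₀
        have ht₀mem := (Bad.filter (fun t => t - f t = ℓ)).min'_mem hne
        simp only [Finset.mem_filter] at ht₀mem
        have hsub2 : Bad.filter (fun t => t - f t = ℓ) ⊆ Finset.Icc t₀ (t₀ + (k - 1)) := by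
          intro t htm
          have hle := Finset.min'_le _ t htm
          simp only [Finset.mem_filter] at htm
          simp only [Finset.mem_Icc]
          refine ⟨hle, ?_⟩
          rcases Nat.eq_or_lt_of_le hle with h | h
          · omega
          · have := hSame t₀ ht₀mem.1 t htm.1 (ht₀mem.2.trans htm.2.symm) h
            omega
        calc (Bad.filter (fun t => t - f t = ℓ)).card
            ≤ (Finset.Icc t₀ (t₀ + (k - 1))).card := Finset.card_le_card hsub2
          _ = k := by rw [Nat.card_Icc]; omega
      · rw [Finset.not_nonempty_iff_eq_empty] at hne
        rw [hne]; simp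
    calc Bad.card ≤ ((Finset.Icc 1 (k - 1)).biUnion
          (fun ℓ => Bad.filter (fun t => t - f t = ℓ))).card := Finset.card_le_card hsub
      _ ≤ ∑ ℓ ∈ Finset.Icc 1 (k - 1), (Bad.filter (fun t => t - f t = ℓ)).card :=
          Finset.card_biUnion_le
      _ ≤ ∑ _ℓ ∈ Finset.Icc 1 (k - 1), k := Finset.sum_le_sum (fun ℓ _ => hcard ℓ)
      _ = (k - 1) * k := by rw [Finset.sum_const, Nat.card_Icc, smul_eq_mul]; congr 1
      _ = k * (k - 1) := Nat.mul_comm _ _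
  -- fiber counting
  have htotal : (Finset.range (n + 1)).card =
      ∑ s : Fin m, ((Finset.range (n + 1)).filter (fun t => p t = s)).card :=
    Finset.card_eq_sum_card_fiberwise (fun t _ => Finset.mem_univ _)
  have hbadtotal : Bad.card = ∑ s : Fin m, (Bad.filter (fun t => p t = s)).card :=
    Finset.card_eq_sum_card_fiberwise (fun t _ => Finset.mem_univ _)
  have hfiber : ∀ s : Fin m, ((Finset.range (n + 1)).filter (fun t => p t = s)).card
      ≤ 2 + (Bad.filter (fun t => p t = s)).card := by
    intro s
    set X := ((Finset.range (n + 1)).filter (fun t => p t = s)).filter (fun t => t ∉ Bad) with hX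
    have hXcard : X.card ≤ 2 := by
      by_contra hcon
      rw [not_le] at hcon
      rw [Finset.two_lt_card_iff] at hcon
      obtain ⟨a, b, c, ha, hb, hc, hab, hac, hbc⟩ := hcon
      have hkey : ∀ u v w, u ∈ X → v ∈ X → w ∈ X → u < v → v < w → False := by
        intro u v w hum hvm hwm huv hvw
        simp only [hX, Finset.mem_filter, Finset.mem_range] at hum hvm hwm
        apply hwm.2
        simp only [hBaddef, Finset.mem_filter, Finset.mem_range]
        exact ⟨hwm.1.1, u, v, huv, hvw, by rw [hum.1.2, hwm.1.2], by rw [hvm.1.2, hwm.1.2]⟩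
      rcases Nat.lt_trichotomy a b with h | h | h
      · rcases Nat.lt_trichotomy b c with h' | h' | h'
        · exact hkey a b c ha hb hc h h'
        · exact hbc h'
        · rcases Nat.lt_trichotomy a c with h'' | h'' | h''
          · exact hkey a c b ha hc hb h'' h'
          · exact hac h''
          · exact hkey c a b hc ha hb h'' h
      · exact hab h
      · rcases Nat.lt_trichotomy a c with h' | h' | h'
        · exact hkey b a c hb ha hc h h'
        · exact hac h'
        · rcases Nat.lt_trichotomy b c with h'' | h'' | h''
          · exact hkey b c a hb hc ha h'' h'
          · exact hbc h''
          · exact hkey c b a hc hb ha h'' h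
    have hsplit : ((Finset.range (n + 1)).filter (fun t => p t = s)).card
        ≤ X.card + (Bad.filter (fun t => p t = s)).card := by
      have hsub3 : (Finset.range (n + 1)).filter (fun t => p t = s)
          ⊆ X ∪ Bad.filter (fun t => p t = s) := by
        intro t ht
        by_cases hb : t ∈ Bad
        · exact Finset.mem_union_right _ (Finset.mem_filter.mpr
            ⟨hb, (Finset.mem_filter.mp ht).2⟩)
        · exact Finset.mem_union_left _ (Finset.mem_filter.mpr ⟨ht, hb⟩)
      calc ((Finset.range (n + 1)).filter (fun t => p t = s)).card
          ≤ (X ∪ Bad.filter (fun t => p t = s)).card := Finset.card_le_card hsub3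
        _ ≤ X.card + (Bad.filter (fun t => p t = s)).card := Finset.card_union_le _ _
    omega
  have hsum : ∑ s : Fin m, ((Finset.range (n + 1)).filter (fun t => p t = s)).card
      ≤ ∑ s : Fin m, (2 + (Bad.filter (fun t => p t = s)).card) :=
    Finset.sum_le_sum (fun s _ => hfiber s)
  rw [Finset.sum_add_distrib, Finset.sum_const, Finset.card_univ, Fintype.card_fin,
    smul_eq_mul] at hsum
  rw [Finset.card_range] at htotal
  omega


/-- if `x` is an `m`-sequence of length `n = 2^k − 1` (one full
period of a maximal-length `k`-stage LFSR), then
`A_N(x) ≥ (n+1)/2 − log₂(n+1)·(log₂(n+1)−1)/2`; in particular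
`n/2 − A_N(x) = O(log² n)`. -/
theorem stmt_11 (k : ℕ) (hk : 0 < k) (Λ : (Fin k → ZMod 2) → (Fin k → ZMod 2))
    (hΛ : IsLFSR k Λ) (x : ℕ → ZMod 2) (hx : Produces Λ x)
    (hP : evPeriod (fun t => Λ^[t] (fun i : Fin k => x i)) = 2 ^ k - 1)
    (n : ℕ) (hn : n = 2 ^ k - 1) :
    (AN n x : ℝ) ≥ (n + 1) / 2 -
      Real.logb 2 (n + 1) * (Real.logb 2 (n + 1) - 1) / 2 := by
  have hne : {m | ANWitness m n x}.Nonempty := ⟨n + 1, witness_exists n x⟩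
  have hANw : ANWitness (AN n x) n x := Nat.sInf_mem hne
  have hbound : n + 1 ≤ 2 * AN n x + k * (k - 1) := count_bound hk hx hP hn hANw
  have h2k : 1 ≤ 2 ^ k := Nat.one_le_two_pow
  have hn1 : (n : ℝ) + 1 = 2 ^ k := by
    have h : n + 1 = 2 ^ k := by omega
    exact_mod_cast congrArg (Nat.cast : ℕ → ℝ) h
  have hlog : Real.logb 2 ((n : ℝ) + 1) = k := by
    rw [hn1, Real.logb_pow, Real.logb_self_eq_one (by norm_num : (1:ℝ) < 2)]
    ring
  rw [ge_iff_le, hlog]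
  have hcast : (n : ℝ) + 1 ≤ 2 * (AN n x : ℝ) + (k : ℝ) * ((k : ℝ) - 1) := by
    have h1 : ((n + 1 : ℕ) : ℝ) ≤ ((2 * AN n x + k * (k - 1) : ℕ) : ℝ) := by
      exact_mod_cast hbound
    push_cast [Nat.cast_sub hk] at h1
    linarith
  linarith
end

section
/- Let s be a path-unique state sequence corresponding to a word x of length n such that every u-th power α^u occurring contiguously in x satisfies u ≤ f(|α|) for a non-increasing f : ℕ → ℕ. If the distinct states q₁,...,q_Q of s are ordered by increasing period and a_i is the number of occurrences of q_i in s, then a_i ≤ b_i, where (b₁,b₂,...) = (f(1)+1, f(2)+1, f(2)+1, ..., with f(i)+1 repeated i times, ...). -/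
/-- The period of a state `st` in the state sequence `s₀…sₙ`:
`min {k − j : s_k = s_j = st, j < k}` if `st` occurs at least twice, `∞` otherwise. -/
noncomputable def statePeriod {σ : Type*} (n : ℕ) (s : ℕ → σ) (st : σ) : ℕ∞ :=
  sInf {t : ℕ∞ | ∃ j k : ℕ, j < k ∧ k ≤ n ∧ s j = st ∧ s k = st ∧ ((k - j : ℕ) : ℕ∞) = t}

/-- The bounding sequence `(b₁, b₂, …) = (f(1)+1, f(2)+1, f(2)+1, …)` in which
`f(i)+1` is repeated `i` times: `b i = f(m) + 1` where `m` is least with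
`i ≤ m(m+1)/2` (1-based indexing). -/
noncomputable def bSeq (f : ℕ → ℕ) (i : ℕ) : ℕ :=
  f (sInf {m : ℕ | i ≤ m * (m + 1) / 2}) + 1


section Helpers13
variable {α σ : Type*} {δ : σ → α → σ → Prop} {init : σ} {acc : Set σ}
  {n : ℕ} {x : ℕ → α} {s : ℕ → σ}

lemma key_lemma (hacc : NFAPath δ init acc n x s)
    (huniq : ∀ y p, NFAPath δ init acc n y p →
      (∀ i < n, y i = x i) ∧ (∀ i ≤ n, p i = s i))
    {d j1 j2 : ℕ} (hd : 0 < d) (h12 : j1 ≤ j2) (hn : j2 + d ≤ n)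
    (h1 : s j1 = s (j1 + d)) (h2 : s j2 = s (j2 + d)) :
    ∀ i, j1 ≤ i → i ≤ j2 → s i = s (i + d) := by
  obtain ⟨hinit, haccn, hstep⟩ := hacc
  classical
  let p' : ℕ → σ := fun i => if i < j1 then s i else if i ≤ j2 then s (i + d) else s i
  let y : ℕ → α := fun i => if i < j1 then x i else if i < j2 then x (i + d) else x i
  have hp'lo : ∀ i, i < j1 → p' i = s i := fun i h => by simp only [p', if_pos h]
  have hp'mid : ∀ i, j1 ≤ i → i ≤ j2 → p' i = s (i + d) := fun i h h' => by
    simp only [p', if_neg (by omega : ¬ i < j1), if_pos h']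
  have hp'hi : ∀ i, j2 < i → p' i = s i := fun i h => by
    simp only [p', if_neg (by omega : ¬ i < j1), if_neg (by omega : ¬ i ≤ j2)]
  have hpath : NFAPath δ init acc n y p' := by
    refine ⟨?_, ?_, ?_⟩
    · rcases Nat.eq_zero_or_pos j1 with h | h
      · rw [hp'mid 0 (by omega) (by omega)]
        subst h
        rw [← h1, hinit]
      · rw [hp'lo 0 h, hinit]
    · rw [hp'hi n (by omega)]; exact haccn
    · intro i hi
      by_cases hc1 : i + 1 ≤ j1
      · have hy : y i = x i := by simp only [y, if_pos (by omega : i < j1)]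
        have hpi : p' i = s i := hp'lo i (by omega)
        have hpi1 : p' (i+1) = s (i+1) := by
          rcases Nat.lt_or_ge (i+1) j1 with h | h
          · exact hp'lo _ h
          · have : i + 1 = j1 := by omega
            rw [hp'mid (i+1) h (by omega), this, ← h1]
        rw [hy, hpi, hpi1]; exact hstep i hi
      · by_cases hc2 : i < j2
        · have hy : y i = x (i + d) := by
            simp only [y, if_neg (by omega : ¬ i < j1), if_pos hc2]
          rw [hy, hp'mid i (by omega) (by omega), hp'mid (i+1) (by omega) (by omega)]
          have : i + d + 1 = i + 1 + d := by omega
          rw [← this]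
          exact hstep (i + d) (by omega)
        · by_cases hc3 : i = j2
          · subst hc3
            have hy : y i = x i := by
              simp only [y, if_neg (by omega : ¬ i < j1), if_neg (by omega : ¬ i < i)]
            rw [hy, hp'mid i (by omega) le_rfl, hp'hi (i+1) (by omega), ← h2]
            exact hstep i hi
          · have hy : y i = x i := by
              simp only [y, if_neg (by omega : ¬ i < j1), if_neg (by omega : ¬ i < j2)]
            rw [hy, hp'hi i (by omega), hp'hi (i+1) (by omega)]
            exact hstep i hi
  obtain ⟨-, hps⟩ := huniq y p' hpath
  intro i h h'
  have := hps i (by omega)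
  rw [hp'mid i h h'] at this
  exact this.symm


lemma swap_lemma (hacc : NFAPath δ init acc n x s)
    (huniq : ∀ y p, NFAPath δ init acc n y p →
      (∀ i < n, y i = x i) ∧ (∀ i ≤ n, p i = s i))
    {t0 t1 t2 : ℕ} (h01 : t0 < t1) (h12 : t1 < t2) (h2n : t2 ≤ n)
    (e0 : s t0 = s t1) (e1 : s t1 = s t2) :
    (∀ t ≤ t2 - t1, s (t0 + t) = s (t1 + t)) ∧
    (∀ t < t2 - t1, x (t0 + t) = x (t1 + t)) ∧
    (∀ i, t0 + (t2 - t1) ≤ i → i < t2 → x i = x (i - (t2 - t1))) := by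
  obtain ⟨hinit, haccn, hstep⟩ := hacc
  classical
  set d1 := t2 - t1 with hd1
  have hd1pos : 0 < d1 := by omega
  let p' : ℕ → σ := fun i => if i < t0 then s i else if i ≤ t0 + d1 then s (i - t0 + t1)
    else if i ≤ t2 then s (i - d1) else s i
  let y : ℕ → α := fun i => if i < t0 then x i else if i < t0 + d1 then x (i - t0 + t1)
    else if i < t2 then x (i - d1) else x i
  have hpA : ∀ i, i < t0 → p' i = s i := fun i h => by simp only [p', if_pos h]
  have hpB : ∀ i, t0 ≤ i → i ≤ t0 + d1 → p' i = s (i - t0 + t1) := fun i h h' => by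
    simp only [p', if_neg (by omega : ¬ i < t0), if_pos h']
  have hpC : ∀ i, t0 + d1 ≤ i → i ≤ t2 → p' i = s (i - d1) := by
    intro i h h'
    rcases Nat.eq_or_lt_of_le h with h0 | h0
    · rw [hpB i (by omega) (by omega), ← h0]
      have e2 : t0 + d1 - t0 + t1 = t1 + d1 := by omega
      have e3 : t1 + d1 = t2 := by omega
      have e4 : t0 + d1 - d1 = t0 := by omega
      rw [e2, e3, e4, ← e1, ← e0]
    · simp only [p', if_neg (by omega : ¬ i < t0), if_neg (by omega : ¬ i ≤ t0 + d1),
        if_pos h']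
  have hpD : ∀ i, t2 ≤ i → p' i = s i := by
    intro i h
    rcases Nat.eq_or_lt_of_le h with h0 | h0
    · rw [hpC i (by omega) (by omega), ← h0]
      have e2 : t2 - d1 = t1 := by omega
      rw [e2, e1]
    · simp only [p', if_neg (by omega : ¬ i < t0), if_neg (by omega : ¬ i ≤ t0 + d1),
        if_neg (by omega : ¬ i ≤ t2)]
  have hyA : ∀ i, i < t0 → y i = x i := fun i h => by simp only [y, if_pos h]
  have hyB : ∀ i, t0 ≤ i → i < t0 + d1 → y i = x (i - t0 + t1) := fun i h h' => by
    simp only [y, if_neg (by omega : ¬ i < t0), if_pos h']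
  have hyC : ∀ i, t0 + d1 ≤ i → i < t2 → y i = x (i - d1) := fun i h h' => by
    simp only [y, if_neg (by omega : ¬ i < t0), if_neg (by omega : ¬ i < t0 + d1), if_pos h']
  have hyD : ∀ i, t2 ≤ i → y i = x i := fun i h => by
    simp only [y, if_neg (by omega : ¬ i < t0), if_neg (by omega : ¬ i < t0 + d1),
      if_neg (by omega : ¬ i < t2)]
  have hpath : NFAPath δ init acc n y p' := by
    refine ⟨?_, ?_, ?_⟩
    · rcases Nat.eq_zero_or_pos t0 with h | h
      · rw [hpB 0 (by omega) (by omega)]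
        have e2 : 0 - t0 + t1 = t1 := by omega
        rw [e2, ← e0, h, hinit]
      · rw [hpA 0 h, hinit]
    · rw [hpD n h2n]; exact haccn
    · intro i hi
      by_cases hc1 : i + 1 ≤ t0
      · rw [hyA i (by omega), hpA i (by omega)]
        have hpi1 : p' (i+1) = s (i+1) := by
          rcases Nat.lt_or_ge (i+1) t0 with h | h
          · exact hpA _ h
          · have h0 : i + 1 = t0 := by omega
            rw [hpB (i+1) h (by omega), h0]
            have e2 : t0 - t0 + t1 = t1 := by omega
            rw [e2, ← e0]
        rw [hpi1]; exact hstep i hi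
      · by_cases hc2 : i < t0 + d1
        · rw [hyB i (by omega) hc2, hpB i (by omega) (by omega),
            hpB (i+1) (by omega) (by omega)]
          have e2 : i + 1 - t0 + t1 = (i - t0 + t1) + 1 := by omega
          rw [e2]
          exact hstep (i - t0 + t1) (by omega)
        · by_cases hc3 : i < t2
          · rw [hyC i (by omega) hc3, hpC i (by omega) (by omega),
              hpC (i+1) (by omega) (by omega)]
            have e2 : i + 1 - d1 = (i - d1) + 1 := by omega
            rw [e2]
            exact hstep (i - d1) (by omega)
          · rw [hyD i (by omega), hpD i (by omega), hpD (i+1) (by omega)]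
            exact hstep i hi
  obtain ⟨hy, hps⟩ := huniq y p' hpath
  refine ⟨?_, ?_, ?_⟩
  · intro t ht
    have h1 := hps (t0 + t) (by omega)
    rw [hpB (t0 + t) (by omega) (by omega)] at h1
    have e2 : t0 + t - t0 + t1 = t1 + t := by omega
    rw [e2] at h1
    exact h1.symm
  · intro t ht
    have h1 := hy (t0 + t) (by omega)
    rw [hyB (t0 + t) (by omega) (by omega)] at h1
    have e2 : t0 + t - t0 + t1 = t1 + t := by omega
    rw [e2] at h1
    exact h1.symm
  · intro i h h'
    have h1 := hy i (by omega)
    rw [hyC i h h'] at h1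
    exact h1.symm


def loopSet (n : ℕ) (s : ℕ → σ) (st : σ) : Set ℕ :=
  {t | 0 < t ∧ ∃ j, j + t ≤ n ∧ s j = st ∧ s (j + t) = st}

lemma statePeriod_set_eq (st : σ) :
    {t : ℕ∞ | ∃ j k : ℕ, j < k ∧ k ≤ n ∧ s j = st ∧ s k = st ∧ ((k - j : ℕ) : ℕ∞) = t}
      = (fun t : ℕ => (t : ℕ∞)) '' loopSet n s st := by
  ext t
  constructor
  · rintro ⟨j, k, hjk, hkn, hj, hk, rfl⟩
    refine ⟨k - j, ⟨by omega, j, by omega, hj, ?_⟩, rfl⟩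
    rwa [show j + (k - j) = k by omega]
  · rintro ⟨t', ⟨ht0, j, hjn, hj, hjt⟩, rfl⟩
    exact ⟨j, j + t', by omega, hjn, hj, hjt, by rw [show j + t' - j = t' by omega]⟩

lemma statePeriod_le_coe_iff {st : σ} {p : ℕ} (h : statePeriod n s st ≤ (p : ℕ∞)) :
    (loopSet n s st).Nonempty ∧ sInf (loopSet n s st) ≤ p := by
  rcases Set.eq_empty_or_nonempty (loopSet n s st) with he | hne
  · exfalso
    rw [statePeriod, statePeriod_set_eq, he, Set.image_empty, sInf_empty, top_le_iff] at h
    exact (by simp : ((p : ℕ∞) ≠ ⊤)) h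
  · refine ⟨hne, ?_⟩
    have hmem := Nat.sInf_mem hne
    have heq : statePeriod n s st = ((sInf (loopSet n s st) : ℕ) : ℕ∞) := by
      rw [statePeriod, statePeriod_set_eq]
      apply le_antisymm
      · exact sInf_le ⟨_, hmem, rfl⟩
      · apply le_sInf
        rintro b ⟨t', ht', rfl⟩
        exact Nat.cast_le.mpr (Nat.sInf_le ht')
    rw [heq] at h
    exact_mod_cast h

lemma statePeriod_le_of_mem {st : σ} {t : ℕ} (ht : t ∈ loopSet n s st) :
    statePeriod n s st ≤ (t : ℕ∞) := by
  rw [statePeriod, statePeriod_set_eq]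
  exact sInf_le ⟨t, ht, rfl⟩


/-- the triangular target finset -/
def triFin (p : ℕ) : Finset (ℕ × ℕ) :=
  (Finset.Icc 1 p).biUnion (fun e => (Finset.range e).image (fun r => (e, r)))

lemma gauss (p : ℕ) : (∑ e ∈ Finset.Icc 1 p, e) * 2 = p * (p + 1) := by
  induction p with
  | zero => simp
  | succ p IH =>
      rw [Finset.sum_Icc_succ_top (by omega)]
      calc (∑ e ∈ Finset.Icc 1 p, e + (p + 1)) * 2
          = (∑ e ∈ Finset.Icc 1 p, e) * 2 + (p + 1) * 2 := by ring
        _ = p * (p + 1) + (p + 1) * 2 := by rw [IH]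
        _ = (p + 1) * (p + 1 + 1) := by ring

lemma triFin_card (p : ℕ) : (triFin p).card * 2 = p * (p + 1) := by
  have hcard : (triFin p).card = ∑ e ∈ Finset.Icc 1 p, e := by
    rw [triFin, Finset.card_biUnion]
    · refine Finset.sum_congr rfl fun e _ => ?_
      rw [Finset.card_image_of_injective _ (fun a b h => by simpa using h), Finset.card_range]
    · intro e he e' he' hne
      simp only [Finset.disjoint_left]
      rintro a ha ha'
      simp only [Finset.mem_image, Finset.mem_range] at ha ha'
      obtain ⟨r, -, rfl⟩ := ha
      obtain ⟨r', -, h⟩ := ha'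
      exact hne (by simpa using (Prod.mk.injEq _ _ _ _ ▸ h).1.symm)
  rw [hcard, gauss]

lemma count_lemma (hacc : NFAPath δ init acc n x s)
    (huniq : ∀ y p, NFAPath δ init acc n y p →
      (∀ i < n, y i = x i) ∧ (∀ i ≤ n, p i = s i))
    {Q : ℕ} {q : Fin Q → σ} (hinj : Function.Injective q) {p : ℕ} {i : Fin Q}
    (hloop : ∀ k : Fin Q, k ≤ i →
      ∃ e j0, 0 < e ∧ e ≤ p ∧ j0 + e ≤ n ∧ s j0 = q k ∧ s (j0 + e) = q k) :
    (i : ℕ) + 1 ≤ p * (p + 1) / 2 := by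
  classical
  have hloop' : ∀ k : Fin Q, ∃ e j0, k ≤ i →
      (0 < e ∧ e ≤ p ∧ j0 + e ≤ n ∧ s j0 = q k ∧ s (j0 + e) = q k) := by
    intro k
    by_cases h : k ≤ i
    · obtain ⟨e, j0, h'⟩ := hloop k h
      exact ⟨e, j0, fun _ => h'⟩
    · exact ⟨1, 0, fun h' => absurd h' h⟩
  choose E J hEJ using hloop'
  -- the injectivity core
  have main : ∀ k k' : Fin Q, k ≤ i → k' ≤ i → E k = E k' → J k % E k = J k' % E k' →
      J k ≤ J k' → k = k' := by
    intro k k' hk hk' hE hmod hle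
    obtain ⟨he, hep, hen, hj, hje⟩ := hEJ k hk
    obtain ⟨he', hep', hen', hj', hje'⟩ := hEJ k' hk'
    set e := E k with hee
    rw [← hE] at hen' hje'
    have per : ∀ i', J k ≤ i' → i' ≤ J k' → s i' = s (i' + e) :=
      key_lemma hacc huniq he hle hen' (by rw [hj, hje]) (by rw [hj', hje'])
    have hdvd : e ∣ J k' - J k := by
      rw [← hE] at hmod
      exact (Nat.modEq_iff_dvd' hle).mp hmod
    obtain ⟨c, hc⟩ := hdvd
    have step : ∀ c', J k + c' * e ≤ J k' → s (J k + c' * e) = s (J k) := by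
      intro c'
      induction c' with
      | zero => simp
      | succ c' IH =>
          intro hcc
          have h1 : J k + c' * e ≤ J k' := by
            have : c' * e ≤ (c' + 1) * e := by
              apply Nat.mul_le_mul_right; omega
            omega
          have h2 := per (J k + c' * e) (by omega) h1
          rw [show J k + (c' + 1) * e = J k + c' * e + e by ring, ← h2, IH h1]
    have hJ' : J k' = J k + c * e := by
      have : e * c = c * e := by ring
      omega
    have : s (J k') = s (J k) := by rw [hJ']; exact step c (by omega)
    exact hinj (by rw [← hj, ← hj', this])
  -- card bound via injection
  have hQi : ∀ m, m ∈ Finset.range ((i : ℕ) + 1) → m < Q := fun m hm => by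
    have := Finset.mem_range.mp hm
    omega
  have hinj2 : (i : ℕ) + 1 ≤ (triFin p).card := by
    have := Finset.card_le_card_of_injOn
      (f := fun m => if h : m < Q then (E ⟨m, h⟩, J ⟨m, h⟩ % E ⟨m, h⟩) else (0, 0))
      (s := Finset.range ((i : ℕ) + 1)) (t := triFin p) ?_ ?_
    · simpa using this
    · intro m hm
      have hmQ := hQi m hm
      have hmi : (⟨m, hmQ⟩ : Fin Q) ≤ i := by
        rw [Fin.le_def]
        exact Nat.lt_succ_iff.mp (Finset.mem_range.mp hm)
      obtain ⟨he, hep, -, -, -⟩ := hEJ _ hmi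
      simp only [dif_pos hmQ]
      rw [triFin, Finset.mem_coe, Finset.mem_biUnion]
      exact ⟨E ⟨m, hmQ⟩, Finset.mem_Icc.mpr ⟨he, hep⟩,
        Finset.mem_image.mpr ⟨_, Finset.mem_range.mpr (Nat.mod_lt _ he), rfl⟩⟩
    · intro m hm m' hm' heq
      have hmQ := hQi m hm
      have hmQ' := hQi m' hm'
      simp only [dif_pos hmQ, dif_pos hmQ', Prod.mk.injEq] at heq
      have hmi : (⟨m, hmQ⟩ : Fin Q) ≤ i := by
        rw [Fin.le_def]; exact Nat.lt_succ_iff.mp (Finset.mem_range.mp hm)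
      have hmi' : (⟨m', hmQ'⟩ : Fin Q) ≤ i := by
        rw [Fin.le_def]; exact Nat.lt_succ_iff.mp (Finset.mem_range.mp hm')
      rcases le_total (J ⟨m, hmQ⟩) (J ⟨m', hmQ'⟩) with h | h
      · have := main _ _ hmi hmi' heq.1 heq.2 h
        simpa using congrArg Fin.val this
      · have := main _ _ hmi' hmi heq.1.symm heq.2.symm h
        have h2 : m' = m := by simpa using congrArg Fin.val this
        omega
  have htri := triFin_card p
  omega


theorem stmt_13' {α σ : Type*} (n : ℕ) (x : ℕ → α) (f : ℕ → ℕ) (hf : Antitone f)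
    (hpow : ∀ j a u, 0 < a → j + u * a ≤ n →
      (∀ m < u * a, x (j + m) = x (j + m % a)) → u ≤ f a)
    (δ : σ → α → σ → Prop) (init : σ) (acc : Set σ) (s : ℕ → σ)
    (hacc : NFAPath δ init acc n x s)
    (huniq : ∀ y p, NFAPath δ init acc n y p →
      (∀ i < n, y i = x i) ∧ (∀ i ≤ n, p i = s i))
    (Q : ℕ) (q : Fin Q → σ) (hinj : Function.Injective q)
    (hcover : ∀ i ≤ n, ∃ j : Fin Q, s i = q j)
    (hsorted : ∀ i j : Fin Q, i ≤ j → statePeriod n s (q i) ≤ statePeriod n s (q j))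
    (a : Fin Q → ℕ) (ha : ∀ j : Fin Q, a j = {i | i ≤ n ∧ s i = q j}.ncard) :
    ∀ i : Fin Q, a i ≤ bSeq f ((i : ℕ) + 1) := by
  classical
  intro i
  rcases Nat.lt_or_ge (a i) 2 with ha2 | ha2
  · rw [bSeq]; omega
  set T : Finset ℕ := (Finset.range (n+1)).filter (fun t => s t = q i) with hT
  have hmemT : ∀ t ∈ T, t ≤ n ∧ s t = q i := by
    intro t ht
    rw [hT, Finset.mem_filter, Finset.mem_range, Nat.lt_succ_iff] at ht
    exact ht
  have hmemT' : ∀ t, t ≤ n → s t = q i → t ∈ T := by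
    intro t h1 h2
    rw [hT, Finset.mem_filter, Finset.mem_range, Nat.lt_succ_iff]
    exact ⟨h1, h2⟩
  have hAcard : a i = T.card := by
    rw [ha i]
    have hset : {t | t ≤ n ∧ s t = q i} = ↑T := by
      ext t
      simp only [Set.mem_setOf_eq, Finset.coe_filter, hT, Finset.mem_range, Nat.lt_succ_iff]
    rw [hset, Set.ncard_coe_finset]
  have hTne : T.Nonempty := Finset.card_pos.mp (by omega)
  set t0 := T.min' hTne with ht0
  set tM := T.max' hTne with htM
  have ht0T := T.min'_mem hTne
  have htMT := T.max'_mem hTne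
  have hpairs : ∀ u ∈ T, ∀ v ∈ T, u < v → (v - u) ∈ loopSet n s (q i) := by
    intro u hu v hv huv
    refine ⟨by omega, u, ?_, (hmemT u hu).2, ?_⟩
    · have := (hmemT v hv).1; omega
    · rw [show u + (v - u) = v by omega]; exact (hmemT v hv).2
  have hlne : (loopSet n s (q i)).Nonempty := by
    obtain ⟨u, hu, v, hv, huv⟩ := Finset.one_lt_card.mp (by omega : 1 < T.card)
    rcases Nat.lt_or_ge u v with h | h
    · exact ⟨v - u, hpairs u hu v hv h⟩
    · exact ⟨u - v, hpairs v hv u hu (by omega)⟩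
  set p := sInf (loopSet n s (q i)) with hp
  have hploop : p ∈ loopSet n s (q i) := by rw [hp]; exact Nat.sInf_mem hlne
  obtain ⟨hppos, j, hjpn, hsj, hsjp⟩ := hploop
  have hjT : j ∈ T := hmemT' j (by omega) hsj
  have hjpT : j + p ∈ T := hmemT' (j + p) (by omega) hsjp
  have ht0j : t0 ≤ j := T.min'_le _ hjT
  have hjptM : j + p ≤ tM := T.le_max' _ hjpT
  have ht0tM : t0 ≤ tM := T.min'_le _ htMT
  have htMn : tM ≤ n := (hmemT _ htMT).1
  have hst0 : s t0 = q i := (hmemT _ ht0T).2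
  have hstM : s tM = q i := (hmemT _ htMT).2
  have hgap : ∀ u ∈ T, ∀ v ∈ T, u < v → p ≤ v - u := fun u hu v hv h =>
    Nat.sInf_le (hpairs u hu v hv h)
  have hquot : ∀ u ∈ T, ∀ v ∈ T, u < v → (u - t0) / p < (v - t0) / p := by
    intro u hu v hv huv
    have hpg := hgap u hu v hv huv
    have h2 : t0 ≤ u := T.min'_le _ hu
    have h3 : (u - t0) + p ≤ v - t0 := by omega
    have h4 := Nat.div_le_div_right (c := p) h3
    rw [Nat.add_div_right _ hppos] at h4
    omega
  have hdivinj : T.card ≤ (tM - t0) / p + 1 := by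
    have := Finset.card_le_card_of_injOn (f := fun t => (t - t0) / p)
      (s := T) (t := Finset.range ((tM - t0) / p + 1)) ?_ ?_
    · simpa using this
    · intro t ht
      rw [Finset.mem_coe, Finset.mem_range]
      show (t - t0) / p < (tM - t0) / p + 1
      have h1 : t ≤ tM := T.le_max' _ ht
      have h2 : t0 ≤ t := T.min'_le _ ht
      have := Nat.div_le_div_right (c := p) (show t - t0 ≤ tM - t0 by omega)
      omega
    · intro u hu v hv heq
      by_contra hne
      rcases Nat.lt_or_ge u v with h | h
      · exact absurd heq (Nat.ne_of_lt (hquot u hu v hv h))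
      · exact absurd heq.symm (Nat.ne_of_lt (hquot v hv u hu (by omega)))
  have hAle : (a i - 1) * p ≤ tM - t0 := by
    have h1 : a i - 1 ≤ (tM - t0) / p := by omega
    exact (Nat.le_div_iff_mul_le hppos).mp h1
  have PER : ∀ i', t0 ≤ i' → i' + p < tM → x i' = x (i' + p) := by
    intro i' h h'
    rcases Nat.lt_or_ge i' j with hc | hc
    · obtain ⟨-, -, hC⟩ := swap_lemma hacc huniq (show t0 < j by omega)
        (show j < j + p by omega) hjpn (by rw [hst0, hsj]) (by rw [hsj, hsjp])
      have hC' := hC (i' + p) (by omega) (by omega)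
      rw [show i' + p - (j + p - j) = i' by omega] at hC'
      exact hC'.symm
    · obtain ⟨-, hB, -⟩ := swap_lemma hacc huniq (show j < j + p by omega)
        (show j + p < tM by omega) htMn (by rw [hsj, hsjp]) (by rw [hsjp, hstM])
      have hB' := hB (i' - j) (by omega)
      rw [show j + (i' - j) = i' by omega, show j + p + (i' - j) = i' + p by omega] at hB'
      exact hB'
  have hmod : ∀ m, m < (a i - 1) * p → x (t0 + m) = x (t0 + m % p) := by
    intro m
    induction m using Nat.strong_induction_on with
    | _ m IH =>
      intro hm
      rcases Nat.lt_or_ge m p with h | h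
      · rw [Nat.mod_eq_of_lt h]
      · have hper := PER (t0 + (m - p)) (by omega) (by omega)
        calc x (t0 + m) = x (t0 + (m - p) + p) := by
              rw [show t0 + (m - p) + p = t0 + m by omega]
          _ = x (t0 + (m - p)) := hper.symm
          _ = x (t0 + (m - p) % p) := IH (m - p) (by omega) (by omega)
          _ = x (t0 + m % p) := by rw [← Nat.mod_eq_sub_mod h]
  have hfp : a i - 1 ≤ f p := hpow t0 p (a i - 1) hppos (by omega) hmod
  have hloopAll : ∀ k : Fin Q, k ≤ i →
      ∃ e j0, 0 < e ∧ e ≤ p ∧ j0 + e ≤ n ∧ s j0 = q k ∧ s (j0 + e) = q k := by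
    intro k hk
    have h1 : statePeriod n s (q k) ≤ (p : ℕ∞) :=
      le_trans (hsorted k i hk) (statePeriod_le_of_mem ⟨hppos, j, hjpn, hsj, hsjp⟩)
    obtain ⟨hne, hle⟩ := statePeriod_le_coe_iff h1
    obtain ⟨hepos, j0, hj0n, hj0, hj0e⟩ := Nat.sInf_mem hne
    exact ⟨sInf (loopSet n s (q k)), j0, hepos, hle, hj0n, hj0, hj0e⟩
  have hcount := count_lemma hacc huniq hinj hloopAll
  rw [bSeq]
  have hmle : sInf {m : ℕ | (i : ℕ) + 1 ≤ m * (m + 1) / 2} ≤ p := Nat.sInf_le hcount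
  have hfm := hf hmle
  omega


end Helpers13

/-- let `s` be the unique accepting path of length `n` of an NFA
accepting the word `x`, where every contiguous power `α^u` in `x` satisfies
`u ≤ f(|α|)` for a non-increasing `f`. If the distinct states `q₁,…,q_Q` of `s`
are ordered by increasing period and `a_i` is the number of occurrences of `q_i`
in `s`, then `a_i ≤ b_i` for each `i`. -/
theorem stmt_13 {α σ : Type*} (n : ℕ) (x : ℕ → α) (f : ℕ → ℕ) (hf : Antitone f)
    (hpow : ∀ j a u, 0 < a → j + u * a ≤ n →
      (∀ m < u * a, x (j + m) = x (j + m % a)) → u ≤ f a)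
    (δ : σ → α → σ → Prop) (init : σ) (acc : Set σ) (s : ℕ → σ)
    (hacc : NFAPath δ init acc n x s)
    (huniq : ∀ y p, NFAPath δ init acc n y p →
      (∀ i < n, y i = x i) ∧ (∀ i ≤ n, p i = s i))
    (Q : ℕ) (q : Fin Q → σ) (hinj : Function.Injective q)
    (hcover : ∀ i ≤ n, ∃ j : Fin Q, s i = q j)
    (hsorted : ∀ i j : Fin Q, i ≤ j → statePeriod n s (q i) ≤ statePeriod n s (q j))
    (a : Fin Q → ℕ) (ha : ∀ j : Fin Q, a j = {i | i ≤ n ∧ s i = q j}.ncard) :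
    ∀ i : Fin Q, a i ≤ bSeq f ((i : ℕ) + 1) := by
  exact stmt_13' n x f hf hpow δ init acc s hacc huniq Q q hinj hcover hsorted a ha
end
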